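/- Let r₁, r₂ > 0 and g, h : ℝⁿ → ℝ ∪ {∞} be proper lsc convex. Then there exists a proper lsc convex f : ℝⁿ → ℝ ∪ {∞} with e_{r₁} g + e_{r₂} h = e_{r₁+r₂} f; specifically f(x) = sup_{v ∈ ℝⁿ} { [e_{r₁} g(x+v) − (r₁/2)‖v‖²] + [e_{r₂} h(x+v) − (r₂/2)‖v‖²] }. -/

import Mathlib

open scoped RealInnerProductSpace

abbrev Euc (n : ℕ) := EuclideanSpace ℝ (Fin n)

noncomputable def moreauEnv {E : Type*} [NormedAddCommGroup E] [InnerProductSpace ℝ E]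
    (r : ℝ) (f : E → EReal) (x : E) : EReal :=
  ⨅ y : E, f y + ((r / 2 * ‖y - x‖ ^ 2 : ℝ) : EReal)

noncomputable def fenchel {E : Type*} [NormedAddCommGroup E] [InnerProductSpace ℝ E]
    (f : E → EReal) (y : E) : EReal :=
  ⨆ x : E, ((⟪y, x⟫ : ℝ) : EReal) - f x

def ProperFn {E : Type*} (f : E → EReal) : Prop :=
  (∃ x, f x ≠ ⊤) ∧ ∀ x, f x ≠ ⊥

def EConvexFn {E : Type*} [AddCommGroup E] [Module ℝ E] (f : E → EReal) : Prop :=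
  ∀ x y : E, ∀ a b : ℝ, 0 ≤ a → 0 ≤ b → a + b = 1 →
    f (a • x + b • y) ≤ (a : EReal) * f x + (b : EReal) * f y

def SymRel {n : ℕ} (A : Set (Euc n × Euc n)) : Prop :=
  ∀ p ∈ A, ∀ q ∈ A, ⟪p.1, q.2⟫ = ⟪q.1, p.2⟫

def MonoRel {n : ℕ} (A : Set (Euc n × Euc n)) : Prop :=
  ∀ p ∈ A, ∀ q ∈ A, 0 ≤ ⟪p.1 - q.1, p.2 - q.2⟫

def MaxMonoRel {n : ℕ} (A : Set (Euc n × Euc n)) : Prop :=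
  MonoRel A ∧ ∀ p : Euc n × Euc n, (∀ q ∈ A, 0 ≤ ⟪p.1 - q.1, p.2 - q.2⟫) → p ∈ A

noncomputable def qrel {n : ℕ} (A : Set (Euc n × Euc n)) (x : Euc n) : EReal :=
  ⨅ (u : Euc n) (_ : (x, u) ∈ A), ((1 / 2 * ⟪x, u⟫ : ℝ) : EReal)

def esubdiff {E : Type*} [NormedAddCommGroup E] [InnerProductSpace ℝ E]
    (f : E → EReal) (x : E) : Set E :=
  {u | ∀ y, f x + ((⟪u, y - x⟫ : ℝ) : EReal) ≤ f y}

open Metric Set in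
theorem lscMinOnCompact {α : Type*} [TopologicalSpace α] [T2Space α] {F : α → EReal}
    (hF : LowerSemicontinuous F) {T : Set α} (hT : IsCompact T) (hne : T.Nonempty) :
    ∃ p ∈ T, ∀ y ∈ T, F p ≤ F y := by
  haveI : Nonempty T := hne.to_subtype
  have hTc : IsClosed T := hT.isClosed
  have hcl : ∀ y : T, IsClosed {z ∈ T | F z ≤ F y} := by
    intro y
    exact hTc.inter (hF.isClosed_preimage (F y))
  have key := IsCompact.nonempty_iInter_of_directed_nonempty_isCompact_isClosed
    (fun y : T => {z ∈ T | F z ≤ F y})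
    (fun y₁ y₂ => by
      rcases le_total (F y₁) (F y₂) with hle | hle
      · exact ⟨y₁, fun z hz => ⟨hz.1, hz.2⟩, fun z hz => ⟨hz.1, hz.2.trans hle⟩⟩
      · exact ⟨y₂, fun z hz => ⟨hz.1, hz.2.trans hle⟩, fun z hz => ⟨hz.1, hz.2⟩⟩)
    (fun y => ⟨y, y.2, le_rfl⟩)
    (fun y => hT.of_isClosed_subset (hcl y) (sep_subset _ _))
    hcl
  obtain ⟨p, hp⟩ := key
  simp only [Set.mem_iInter] at hp
  have hpT : p ∈ T := (hp ⟨hne.some, hne.some_mem⟩).1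
  exact ⟨p, hpT, fun y hy => (hp ⟨y, hy⟩).2⟩

open Metric Set in
theorem affine_minorant {n : ℕ} (g : Euc n → EReal) (hg : ProperFn g)
    (hglsc : LowerSemicontinuous g) (hgconv : EConvexFn g) :
    ∃ (s : Euc n) (c : ℝ), ∀ y, ((⟪s, y⟫ + c : ℝ) : EReal) ≤ g y := by
  classical
  set S : Set (Euc n × ℝ) := {p | g p.1 ≤ (p.2 : EReal)} with hS
  have hSclosed : IsClosed S := by
    have h1 : IsClosed {q : Euc n × EReal | g q.1 ≤ q.2} := hglsc.isClosed_epigraph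
    have h2 : Continuous fun p : Euc n × ℝ => ((p.1, (p.2 : EReal)) : Euc n × EReal) :=
      continuous_fst.prodMk (continuous_coe_real_ereal.comp continuous_snd)
    exact h1.preimage h2
  have hSconv : Convex ℝ S := by
    intro p hp q hq a b ha hb hab
    simp only [hS, mem_setOf_eq] at hp hq ⊢
    have h1 : g (a • p.1 + b • q.1) ≤ (a : EReal) * g p.1 + (b : EReal) * g q.1 :=
      hgconv _ _ a b ha hb hab
    have h2 : (a : EReal) * g p.1 ≤ (a : EReal) * (p.2 : EReal) :=
      mul_le_mul_of_nonneg_left hp (by exact_mod_cast ha)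
    have h3 : (b : EReal) * g q.1 ≤ (b : EReal) * (q.2 : EReal) :=
      mul_le_mul_of_nonneg_left hq (by exact_mod_cast hb)
    have h4 : (a : EReal) * (p.2 : EReal) + (b : EReal) * (q.2 : EReal)
        = ((a * p.2 + b * q.2 : ℝ) : EReal) := by
      rw [EReal.coe_add, EReal.coe_mul, EReal.coe_mul]
    calc g ((a • p + b • q).1) = g (a • p.1 + b • q.1) := rfl
      _ ≤ (a : EReal) * g p.1 + (b : EReal) * g q.1 := h1
      _ ≤ (a : EReal) * (p.2 : EReal) + (b : EReal) * (q.2 : EReal) := add_le_add h2 h3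
      _ = ((a * p.2 + b * q.2 : ℝ) : EReal) := h4
      _ = (((a • p + b • q).2 : ℝ) : EReal) := rfl
  obtain ⟨x₀, hx₀⟩ := hg.1
  have hb₀ := hg.2 x₀
  set t₀ : ℝ := (g x₀).toReal with ht₀def
  have ht₀ : g x₀ = (t₀ : EReal) := (EReal.coe_toReal hx₀ hb₀).symm
  have hp₀ : ((x₀, t₀ - 1) : Euc n × ℝ) ∉ S := by
    intro hmem
    simp only [hS, mem_setOf_eq, ht₀] at hmem
    have := EReal.coe_le_coe_iff.1 hmem
    linarith
  obtain ⟨ℓ, u, hu, hSsep⟩ := geometric_hahn_banach_point_closed hSconv hSclosed hp₀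
  have hdec : ∀ (y : Euc n) (t : ℝ), ℓ (y, t) = ℓ (y, 0) + t * ℓ (0, 1) := by
    intro y t
    have h : ((y, t) : Euc n × ℝ) = (y, 0) + t • ((0 : Euc n), (1 : ℝ)) := by
      simp [Prod.ext_iff]
    rw [h, map_add, map_smul, smul_eq_mul]
  set A : ℝ := ℓ (x₀, 0) with hA
  set β : ℝ := ℓ (0, 1) with hβ
  have hmemS : ∀ k : ℝ, 0 ≤ k → ((x₀, t₀ + k) : Euc n × ℝ) ∈ S := by
    intro k hk
    simp only [hS, mem_setOf_eq, ht₀]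
    exact_mod_cast (by linarith : t₀ ≤ t₀ + k)
  have hβ0 : 0 ≤ β := by
    by_contra hneg
    push_neg at hneg
    set k : ℝ := max 0 ((A + t₀ * β - u) / (-β) + 1) with hk
    have hk0 : 0 ≤ k := le_max_left _ _
    have hk1 : (A + t₀ * β - u) / (-β) + 1 ≤ k := le_max_right _ _
    have h2 := hSsep _ (hmemS k hk0)
    rw [hdec, ← hA] at h2
    have hβpos : 0 < -β := by linarith
    have h3 : A + t₀ * β - u ≤ (k - 1) * (-β) := by
      rw [← div_le_iff₀ hβpos] at *
      linarith [hk1]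
    nlinarith
  have hβne : β ≠ 0 := by
    intro h0
    have h2 := hSsep _ (hmemS 0 le_rfl)
    rw [hdec, ← hA, h0] at h2
    rw [hdec, ← hA, h0] at hu
    simp at h2 hu
    linarith
  have hβpos : 0 < β := lt_of_le_of_ne hβ0 (Ne.symm hβne)
  set ℓ₁ : Euc n →L[ℝ] ℝ := ℓ.comp (ContinuousLinearMap.inl ℝ (Euc n) ℝ) with hℓ₁
  set s : Euc n := (InnerProductSpace.toDual ℝ (Euc n)).symm (-(β⁻¹) • ℓ₁) with hs
  have hsy : ∀ y : Euc n, ⟪s, y⟫ = -(β⁻¹) * ℓ (y, 0) := by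
    intro y
    rw [hs, InnerProductSpace.toDual_symm_apply]
    simp [hℓ₁]
  refine ⟨s, u / β, fun y => ?_⟩
  by_cases hy : g y = ⊤
  · rw [hy]; exact le_top
  · have hyb := hg.2 y
    set ty : ℝ := (g y).toReal with hty
    have hgy : g y = (ty : EReal) := (EReal.coe_toReal hy hyb).symm
    have hmem : ((y, ty) : Euc n × ℝ) ∈ S := by
      simp only [hS, mem_setOf_eq, hgy]; exact le_rfl
    have h2 := hSsep _ hmem
    rw [hdec] at h2
    rw [hgy]
    rw [EReal.coe_le_coe_iff]
    rw [hsy]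
    have hβi : 0 < β⁻¹ := inv_pos.2 hβpos
    have hc : β * β⁻¹ = 1 := mul_inv_cancel₀ hβne
    rw [div_eq_mul_inv]
    have h5 : ty * β * β⁻¹ = ty := by rw [mul_assoc, hc, mul_one]
    nlinarith [mul_lt_mul_of_pos_right h2 hβi]

open Metric Set in
theorem prox_exists {n : ℕ} (r : ℝ) (hr : 0 < r) (g : Euc n → EReal)
    (hg : ProperFn g) (hglsc : LowerSemicontinuous g)
    (s : Euc n) (c : ℝ) (hmin : ∀ y, ((⟪s, y⟫ + c : ℝ) : EReal) ≤ g y) (x : Euc n) :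
    ∃ p : Euc n, g p ≠ ⊤ ∧ ∀ y : Euc n,
      g p + ((r / 2 * ‖p - x‖ ^ 2 : ℝ) : EReal) ≤ g y + ((r / 2 * ‖y - x‖ ^ 2 : ℝ) : EReal) := by
  classical
  set F : Euc n → EReal := fun y => g y + ((r / 2 * ‖y - x‖ ^ 2 : ℝ) : EReal) with hFdef
  have hq : Continuous fun y : Euc n => (r / 2 * ‖y - x‖ ^ 2 : ℝ) := by
    continuity
  have hFlsc : LowerSemicontinuous F := by
    apply hglsc.add' (continuous_coe_real_ereal.comp hq).lowerSemicontinuous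
    intro y
    apply EReal.continuousAt_add
    · exact Or.inr (EReal.coe_ne_bot _)
    · exact Or.inr (EReal.coe_ne_top _)
  obtain ⟨x₀, hx₀⟩ := hg.1
  have hb₀ := hg.2 x₀
  set V : ℝ := (g x₀).toReal + r / 2 * ‖x₀ - x‖ ^ 2 with hVdef
  have hFx₀ : F x₀ = (V : EReal) := by
    rw [hFdef]
    simp only
    rw [← EReal.coe_toReal hx₀ hb₀, ← EReal.coe_add]
  set T : Set (Euc n) := F ⁻¹' Iic (V : EReal) with hTdef
  have hx₀T : x₀ ∈ T := by simp [hTdef, hFx₀]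
  have hTclosed : IsClosed T := hFlsc.isClosed_preimage _
  set R : ℝ := 2 / r * (‖s‖ + |V - c + ‖s‖ * ‖x‖| + 1) + 1 with hRdef
  have hTsub : T ⊆ closedBall x R := by
    intro y hy
    have h1 : ((⟪s, y⟫ + c + r / 2 * ‖y - x‖ ^ 2 : ℝ) : EReal) ≤ (V : EReal) := by
      calc ((⟪s, y⟫ + c + r / 2 * ‖y - x‖ ^ 2 : ℝ) : EReal)
          = ((⟪s, y⟫ + c : ℝ) : EReal) + ((r / 2 * ‖y - x‖ ^ 2 : ℝ) : EReal) := by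
            rw [← EReal.coe_add]
        _ ≤ g y + ((r / 2 * ‖y - x‖ ^ 2 : ℝ) : EReal) := add_le_add (hmin y) le_rfl
        _ ≤ (V : EReal) := hy
    have hre : ⟪s, y⟫ + c + r / 2 * ‖y - x‖ ^ 2 ≤ V := EReal.coe_le_coe_iff.1 h1
    have hip : -(‖s‖ * ‖y‖) ≤ ⟪s, y⟫ := by
      have := abs_real_inner_le_norm s y
      rw [abs_le] at this
      exact this.1
    have hyn : ‖y‖ ≤ ‖y - x‖ + ‖x‖ := by
      calc ‖y‖ = ‖(y - x) + x‖ := by rw [sub_add_cancel]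
        _ ≤ ‖y - x‖ + ‖x‖ := norm_add_le _ _
    set t : ℝ := ‖y - x‖ with htdef
    have ht0 : 0 ≤ t := norm_nonneg _
    have hM : V - c + ‖s‖ * ‖x‖ ≤ |V - c + ‖s‖ * ‖x‖| := le_abs_self _
    have hkey : r / 2 * t ^ 2 ≤ |V - c + ‖s‖ * ‖x‖| + ‖s‖ * t := by
      have h7 := mul_le_mul_of_nonneg_left hyn (norm_nonneg s)
      rw [mul_add] at h7
      have t1 : -(inner ℝ s y : ℝ) ≤ ‖s‖ * t + ‖s‖ * ‖x‖ := by linarith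
      have t2 : r / 2 * t ^ 2 ≤ V - c - (inner ℝ s y : ℝ) := by linarith
      have t3 : V - c - (inner ℝ s y : ℝ) ≤ |V - c + ‖s‖ * ‖x‖| + ‖s‖ * t := by linarith
      exact t2.trans t3
    rw [mem_closedBall, dist_eq_norm]
    by_contra hcon
    push_neg at hcon
    have ht1 : 1 < t := by
      have : (1:ℝ) ≤ R := by
        rw [hRdef]
        have : 0 ≤ 2 / r * (‖s‖ + |V - c + ‖s‖ * ‖x‖| + 1) := by positivity
        linarith
      linarith
    have hRt : r / 2 * R ≥ ‖s‖ + |V - c + ‖s‖ * ‖x‖| + 1 := by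
      rw [hRdef]
      have h2 : r / 2 * (2 / r * (‖s‖ + |V - c + ‖s‖ * ‖x‖| + 1)) =
          ‖s‖ + |V - c + ‖s‖ * ‖x‖| + 1 := by
        field_simp
      nlinarith
    rw [← htdef] at hcon
    nlinarith [mul_le_mul_of_nonneg_right hRt ht0,
      mul_lt_mul_of_pos_right (mul_lt_mul_of_pos_left hcon
        (by positivity : (0:ℝ) < r / 2)) (by linarith : (0:ℝ) < t),
      mul_le_mul_of_nonneg_left ht1.le (abs_nonneg (V - c + ‖s‖ * ‖x‖))]
  have hTcompact : IsCompact T :=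
    (isCompact_closedBall x R).of_isClosed_subset hTclosed hTsub
  obtain ⟨p, hpT, hpmin⟩ := lscMinOnCompact hFlsc hTcompact ⟨x₀, hx₀T⟩
  have hFp : F p ≤ (V : EReal) := hpT
  have hptop : g p ≠ ⊤ := by
    intro htop
    rw [hFdef] at hFp
    simp only [htop] at hFp
    rw [EReal.top_add_coe] at hFp
    exact absurd hFp (by simp)
  refine ⟨p, hptop, fun y => ?_⟩
  by_cases hyT : y ∈ T
  · exact hpmin y hyT
  · have : (V : EReal) < F y := by
      simp only [hTdef, mem_preimage, mem_Iic, not_le] at hyT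
      exact hyT
    exact le_trans (hFp.trans this.le) le_rfl

open Metric Set in
theorem env_pack {n : ℕ} (r : ℝ) (hr : 0 < r) (g : Euc n → EReal)
    (hg : ProperFn g) (hglsc : LowerSemicontinuous g) (hgconv : EConvexFn g) :
    ∃ m : Euc n → ℝ,
      (∀ x, moreauEnv r g x = ((m x : ℝ) : EReal)) ∧
      (∀ x y a b, 0 ≤ a → 0 ≤ b → a + b = 1 → m (a • x + b • y) ≤ a * m x + b * m y) ∧
      (∀ x, ∃ u : Euc n, ∀ y, m y ≤ m x + ⟪u, y - x⟫ + r / 2 * ‖y - x‖ ^ 2) := by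
  classical
  obtain ⟨s, c, hmin⟩ := affine_minorant g hg hglsc hgconv
  have hP : ∀ x : Euc n, ∃ p : Euc n, g p ≠ ⊤ ∧ ∀ y : Euc n,
      g p + ((r / 2 * ‖p - x‖ ^ 2 : ℝ) : EReal) ≤ g y + ((r / 2 * ‖y - x‖ ^ 2 : ℝ) : EReal) :=
    fun x => prox_exists r hr g hg hglsc s c hmin x
  choose P hPtop hPmin using hP
  set m : Euc n → ℝ := fun x => (g (P x)).toReal + r / 2 * ‖P x - x‖ ^ 2 with hmdef
  have hgP : ∀ x, g (P x) = (((g (P x)).toReal : ℝ) : EReal) :=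
    fun x => (EReal.coe_toReal (hPtop x) (hg.2 _)).symm
  have hval : ∀ x, g (P x) + ((r / 2 * ‖P x - x‖ ^ 2 : ℝ) : EReal) = ((m x : ℝ) : EReal) := by
    intro x
    rw [hgP x, ← EReal.coe_add]
  have henv : ∀ x, moreauEnv r g x = ((m x : ℝ) : EReal) := by
    intro x
    apply le_antisymm
    · exact iInf_le_of_le (P x) (le_of_eq (hval x))
    · exact le_iInf fun y => (hval x) ▸ hPmin x y
  refine ⟨m, henv, ?_, ?_⟩
  · intro x y a b ha hb hab
    set q : Euc n := a • P x + b • P y with hqdef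
    set z : Euc n := a • x + b • y with hzdef
    have hnq : ‖q - z‖ ≤ a * ‖P x - x‖ + b * ‖P y - y‖ := by
      have h1 : q - z = a • (P x - x) + b • (P y - y) := by
        rw [hqdef, hzdef]; module
      rw [h1]
      calc ‖a • (P x - x) + b • (P y - y)‖ ≤ ‖a • (P x - x)‖ + ‖b • (P y - y)‖ :=
            norm_add_le _ _
        _ = a * ‖P x - x‖ + b * ‖P y - y‖ := by
            rw [norm_smul, norm_smul, Real.norm_eq_abs, Real.norm_eq_abs,
              abs_of_nonneg ha, abs_of_nonneg hb]
    have hkey : moreauEnv r g z ≤ ((a * m x + b * m y : ℝ) : EReal) := by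
      calc moreauEnv r g z ≤ g q + ((r / 2 * ‖q - z‖ ^ 2 : ℝ) : EReal) := iInf_le _ q
        _ ≤ ((a * (g (P x)).toReal + b * (g (P y)).toReal : ℝ) : EReal)
            + ((r / 2 * ‖q - z‖ ^ 2 : ℝ) : EReal) := by
            apply add_le_add _ le_rfl
            calc g q ≤ (a : EReal) * g (P x) + (b : EReal) * g (P y) :=
                  hgconv _ _ a b ha hb hab
              _ = ((a * (g (P x)).toReal + b * (g (P y)).toReal : ℝ) : EReal) := by
                  rw [hgP x, hgP y, ← EReal.coe_mul, ← EReal.coe_mul, ← EReal.coe_add]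
                  norm_cast
        _ = ((a * (g (P x)).toReal + b * (g (P y)).toReal + r / 2 * ‖q - z‖ ^ 2 : ℝ) : EReal) := by
            rw [← EReal.coe_add]
        _ ≤ ((a * m x + b * m y : ℝ) : EReal) := by
            rw [EReal.coe_le_coe_iff, hmdef]
            simp only
            have h2 : 0 ≤ ‖q - z‖ := norm_nonneg _
            have h3 : 0 ≤ ‖P x - x‖ := norm_nonneg _
            have h4 : 0 ≤ ‖P y - y‖ := norm_nonneg _
            have hint1 : r / 2 * (‖q - z‖ * ‖q - z‖) ≤ r / 2 *
                ((a * ‖P x - x‖ + b * ‖P y - y‖) * (a * ‖P x - x‖ + b * ‖P y - y‖)) :=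
              mul_le_mul_of_nonneg_left (mul_self_le_mul_self h2 hnq) (by positivity)
            have hint2 : 0 ≤ r / 2 * (a * b * (‖P x - x‖ - ‖P y - y‖) ^ 2) := by positivity
            have hbe : b = 1 - a := by linarith
            have hid : a * (r / 2 * ‖P x - x‖ ^ 2) + b * (r / 2 * ‖P y - y‖ ^ 2)
                - r / 2 * ((a * ‖P x - x‖ + b * ‖P y - y‖) * (a * ‖P x - x‖ + b * ‖P y - y‖))
                = r / 2 * (a * b * (‖P x - x‖ - ‖P y - y‖) ^ 2) := by
              rw [hbe]; ring
            nlinarith [hint1, hint2, hid]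
    rw [henv z] at hkey
    exact EReal.coe_le_coe_iff.1 hkey
  · intro x
    refine ⟨r • (x - P x), fun y => ?_⟩
    have hkey : moreauEnv r g y
        ≤ ((m x + ⟪r • (x - P x), y - x⟫ + r / 2 * ‖y - x‖ ^ 2 : ℝ) : EReal) := by
      calc moreauEnv r g y ≤ g (P x) + ((r / 2 * ‖P x - y‖ ^ 2 : ℝ) : EReal) := iInf_le _ (P x)
        _ = (((g (P x)).toReal + r / 2 * ‖P x - y‖ ^ 2 : ℝ) : EReal) := by
            rw [hgP x, ← EReal.coe_add]
            norm_cast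
        _ ≤ ((m x + ⟪r • (x - P x), y - x⟫ + r / 2 * ‖y - x‖ ^ 2 : ℝ) : EReal) := by
            rw [EReal.coe_le_coe_iff, hmdef]
            simp only
            have h1 : P x - y = (P x - x) - (y - x) := by abel
            rw [h1, norm_sub_sq_real, real_inner_smul_left]
            have h2 : ⟪x - P x, y - x⟫ = -⟪P x - x, y - x⟫ := by
              rw [← inner_neg_left, neg_sub]
            rw [h2]
            ring_nf
            nlinarith [sq_nonneg ‖y - x‖]
    rw [henv y] at hkey
    exact EReal.coe_le_coe_iff.1 hkey

open Metric Set in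
theorem m_cont {n : ℕ} (r : ℝ) (hr : 0 < r) (m : Euc n → ℝ)
    (hconv : ∀ x y a b, 0 ≤ a → 0 ≤ b → a + b = 1 → m (a • x + b • y) ≤ a * m x + b * m y)
    (hquad : ∀ x, ∃ u : Euc n, ∀ y, m y ≤ m x + ⟪u, y - x⟫ + r / 2 * ‖y - x‖ ^ 2) :
    Continuous m := by
  rw [continuous_iff_continuousAt]
  intro x
  obtain ⟨u, hu⟩ := hquad x
  have hup : ∀ y, m y - m x ≤ ‖u‖ * ‖y - x‖ + r / 2 * ‖y - x‖ ^ 2 := by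
    intro y
    have h1 := hu y
    have h2 : ⟪u, y - x⟫ ≤ ‖u‖ * ‖y - x‖ := real_inner_le_norm u (y - x)
    linarith
  have hlow : ∀ y, m x - m y ≤ ‖u‖ * ‖y - x‖ + r / 2 * ‖y - x‖ ^ 2 := by
    intro y
    have h2 := hconv y (x + (x - y)) (1/2) (1/2) (by norm_num) (by norm_num) (by norm_num)
    have he : ((1:ℝ)/2) • y + ((1:ℝ)/2) • (x + (x - y)) = x := by module
    rw [he] at h2
    have h3 := hu (x + (x - y))
    have he2 : x + (x - y) - x = x - y := by abel
    rw [he2] at h3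
    have h4 : ⟪u, x - y⟫ ≤ ‖u‖ * ‖x - y‖ := real_inner_le_norm u (x - y)
    have h5 : ‖x - y‖ = ‖y - x‖ := norm_sub_rev _ _
    rw [h5] at h4 h3
    linarith
  rw [Metric.continuousAt_iff]
  intro ε hε
  refine ⟨min 1 (ε / (‖u‖ + r / 2 + 1)), lt_min one_pos (by positivity), fun {y} hy => ?_⟩
  rw [dist_eq_norm] at hy
  rw [Real.dist_eq]
  have ht0 : (0:ℝ) ≤ ‖y - x‖ := norm_nonneg _
  have ht1 : ‖y - x‖ < 1 := lt_of_lt_of_le hy (min_le_left _ _)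
  have ht2 : ‖y - x‖ < ε / (‖u‖ + r / 2 + 1) := lt_of_lt_of_le hy (min_le_right _ _)
  have hC : (0:ℝ) < ‖u‖ + r / 2 + 1 := by positivity
  have ht3 : ‖y - x‖ * (‖u‖ + r / 2 + 1) < ε := by
    rw [← lt_div_iff₀ hC]
    exact ht2
  have hsq : ‖y - x‖ ^ 2 ≤ ‖y - x‖ := by nlinarith
  have hb1 : ‖u‖ * ‖y - x‖ + r / 2 * ‖y - x‖ ^ 2 < ε := by
    nlinarith [mul_le_mul_of_nonneg_left hsq (by positivity : (0:ℝ) ≤ r / 2)]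
  rw [abs_sub_lt_iff]
  constructor
  · linarith [hup y]
  · linarith [hlow y]

theorem stmt19 {n : ℕ} (r₁ r₂ : ℝ) (hr₁ : 0 < r₁) (hr₂ : 0 < r₂)
    (g h : Euc n → EReal) (hg : ProperFn g) (hglsc : LowerSemicontinuous g)
    (hgconv : EConvexFn g) (hh : ProperFn h) (hhlsc : LowerSemicontinuous h)
    (hhconv : EConvexFn h)
    (f : Euc n → EReal)
    (hf : f = fun x => ⨆ v : Euc n,
      (moreauEnv r₁ g (x + v) - ((r₁ / 2 * ‖v‖ ^ 2 : ℝ) : EReal))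
        + (moreauEnv r₂ h (x + v) - ((r₂ / 2 * ‖v‖ ^ 2 : ℝ) : EReal))) :
    ProperFn f ∧ LowerSemicontinuous f ∧ EConvexFn f ∧
      ∀ x : Euc n, moreauEnv r₁ g x + moreauEnv r₂ h x = moreauEnv (r₁ + r₂) f x := by
  classical
  obtain ⟨m₁, hm₁env, hm₁conv, hm₁quad⟩ := env_pack r₁ hr₁ g hg hglsc hgconv
  obtain ⟨m₂, hm₂env, hm₂conv, hm₂quad⟩ := env_pack r₂ hr₂ h hh hhlsc hhconv
  obtain ⟨R, hRdef⟩ : ∃ R : ℝ, R = r₁ + r₂ := ⟨r₁ + r₂, rfl⟩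
  have hR : 0 < R := by rw [hRdef]; positivity
  set φ : Euc n → ℝ := fun x => m₁ x + m₂ x with hφdef
  have hφconv : ∀ x y a b, 0 ≤ a → 0 ≤ b → a + b = 1 →
      φ (a • x + b • y) ≤ a * φ x + b * φ y := by
    intro x y a b ha hb hab
    have h1 := hm₁conv x y a b ha hb hab
    have h2 := hm₂conv x y a b ha hb hab
    simp only [hφdef]
    ring_nf
    nlinarith [h1, h2]
  have hφquad : ∀ x, ∃ u : Euc n, ∀ y, φ y ≤ φ x + ⟪u, y - x⟫ + R / 2 * ‖y - x‖ ^ 2 := by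
    intro x
    obtain ⟨u₁, hu₁⟩ := hm₁quad x
    obtain ⟨u₂, hu₂⟩ := hm₂quad x
    refine ⟨u₁ + u₂, fun y => ?_⟩
    have h3 : ⟪u₁ + u₂, y - x⟫ = ⟪u₁, y - x⟫ + ⟪u₂, y - x⟫ := inner_add_left _ _ _
    have h4 := hu₁ y
    have h5 := hu₂ y
    simp only [hφdef, hRdef]
    rw [h3]
    ring_nf
    ring_nf at h4 h5
    nlinarith [h4, h5]
  have hφcont : Continuous φ := m_cont R hR φ hφconv hφquad
  have hfre : ∀ x, f x = ⨆ v : Euc n, ((φ (x + v) - R / 2 * ‖v‖ ^ 2 : ℝ) : EReal) := by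
    intro x
    rw [hf]
    simp only
    congr 1
    funext v
    rw [hm₁env, hm₂env, ← EReal.coe_sub, ← EReal.coe_sub, ← EReal.coe_add]
    rw [EReal.coe_eq_coe_iff]
    simp only [hφdef, hRdef]
    ring
  -- lower bound of envelope of f
  have hlow : ∀ x, ((φ x : ℝ) : EReal) ≤ moreauEnv R f x := by
    intro x
    apply le_iInf
    intro z
    have h1 : ((φ x - R / 2 * ‖x - z‖ ^ 2 : ℝ) : EReal) ≤ f z := by
      rw [hfre z]
      have := le_iSup (fun v : Euc n => ((φ (z + v) - R / 2 * ‖v‖ ^ 2 : ℝ) : EReal)) (x - z)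
      simpa using this
    calc ((φ x : ℝ) : EReal)
        = ((φ x - R / 2 * ‖x - z‖ ^ 2 : ℝ) : EReal) + ((R / 2 * ‖z - x‖ ^ 2 : ℝ) : EReal) := by
          rw [← EReal.coe_add, EReal.coe_eq_coe_iff, norm_sub_rev]
          ring
      _ ≤ f z + ((R / 2 * ‖z - x‖ ^ 2 : ℝ) : EReal) := add_le_add h1 le_rfl
  -- upper bound: key point z(x)
  have hupkey : ∀ x, ∃ z, f z ≤ ((φ x - R / 2 * ‖z - x‖ ^ 2 : ℝ) : EReal) := by
    intro x
    obtain ⟨u, hu⟩ := hφquad x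
    refine ⟨x - R⁻¹ • u, ?_⟩
    · rw [hfre]
      apply iSup_le
      intro v
      rw [EReal.coe_le_coe_iff]
      have h1 := hu (x - R⁻¹ • u + v)
      have he1 : x - R⁻¹ • u + v - x = v - R⁻¹ • u := by abel
      rw [he1] at h1
      have he2 : x - R⁻¹ • u - x = -(R⁻¹ • u) := by abel
      rw [he2]
      have h2 : ⟪u, v - R⁻¹ • u⟫ = ⟪u, v⟫ - R⁻¹ * (‖u‖ * ‖u‖) := by
        rw [inner_sub_right, real_inner_smul_right, real_inner_self_eq_norm_mul_norm]
      have h3 : ‖v - R⁻¹ • u‖ ^ 2 = ‖v‖ ^ 2 - 2 * (R⁻¹ * ⟪v, u⟫) + R⁻¹ ^ 2 * ‖u‖ ^ 2 := by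
        rw [norm_sub_sq_real, real_inner_smul_right, norm_smul, Real.norm_eq_abs,
          abs_of_pos (inv_pos.2 hR)]
        ring
      have h4 : ‖-(R⁻¹ • u)‖ ^ 2 = R⁻¹ ^ 2 * ‖u‖ ^ 2 := by
        rw [norm_neg, norm_smul, Real.norm_eq_abs, abs_of_pos (inv_pos.2 hR)]
        ring
      have h5 : ⟪v, u⟫ = ⟪u, v⟫ := real_inner_comm _ _
      have hcancel : R * R⁻¹ = 1 := mul_inv_cancel₀ (ne_of_gt hR)
      rw [h2, h3, h5] at h1
      rw [h4]
      have hid : (⟪u, v⟫ - R⁻¹ * (‖u‖ * ‖u‖))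
          + R / 2 * (‖v‖ ^ 2 - 2 * (R⁻¹ * ⟪u, v⟫) + R⁻¹ ^ 2 * ‖u‖ ^ 2)
          + R / 2 * (R⁻¹ ^ 2 * ‖u‖ ^ 2) - R / 2 * ‖v‖ ^ 2
          = (1 - R * R⁻¹) * ⟪u, v⟫ + (R * R⁻¹ - 1) * (R⁻¹ * ‖u‖ ^ 2) := by ring
      rw [hcancel] at hid
      simp only [sub_self, one_mul, zero_mul, mul_zero] at hid
      linarith [h1, hid]
  have hup : ∀ x, moreauEnv R f x ≤ ((φ x : ℝ) : EReal) := by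
    intro x
    obtain ⟨z, hz⟩ := hupkey x
    calc moreauEnv R f x ≤ f z + ((R / 2 * ‖z - x‖ ^ 2 : ℝ) : EReal) := iInf_le _ z
      _ ≤ ((φ x - R / 2 * ‖z - x‖ ^ 2 : ℝ) : EReal) + ((R / 2 * ‖z - x‖ ^ 2 : ℝ) : EReal) :=
          add_le_add hz le_rfl
      _ = ((φ x : ℝ) : EReal) := by
          rw [← EReal.coe_add, EReal.coe_eq_coe_iff]; ring
  have hident : ∀ x, moreauEnv r₁ g x + moreauEnv r₂ h x = moreauEnv R f x := by
    intro x
    rw [hm₁env, hm₂env, ← EReal.coe_add]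
    exact le_antisymm (hlow x) (hup x)
  rw [hRdef] at hident
  refine ⟨⟨?_, ?_⟩, ?_, ?_, hident⟩
  · obtain ⟨z, hz⟩ := hupkey 0
    refine ⟨z, fun htop => ?_⟩
    rw [htop] at hz
    exact absurd hz (not_le.2 (EReal.coe_lt_top _))
  · intro x
    have h1 : ((φ (x + 0) - R / 2 * ‖(0 : Euc n)‖ ^ 2 : ℝ) : EReal) ≤ f x := by
      rw [hfre x]
      exact le_iSup (fun v : Euc n => ((φ (x + v) - R / 2 * ‖v‖ ^ 2 : ℝ) : EReal)) 0
    intro hbot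
    rw [hbot] at h1
    exact absurd h1 (not_le.2 (EReal.bot_lt_coe _))
  · have hfeq : f = fun x => ⨆ v : Euc n, ((φ (x + v) - R / 2 * ‖v‖ ^ 2 : ℝ) : EReal) :=
      funext hfre
    rw [hfeq]
    apply lowerSemicontinuous_iSup
    intro v
    apply Continuous.lowerSemicontinuous
    exact continuous_coe_real_ereal.comp
      ((hφcont.comp (continuous_id.add continuous_const)).sub continuous_const)
  · intro x y a b ha hb hab
    refine le_trans (le_of_eq (hfre _)) (iSup_le fun v => ?_)
    have hterm1 : ((φ (x + v) - R / 2 * ‖v‖ ^ 2 : ℝ) : EReal) ≤ f x := by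
      rw [hfre x]
      exact le_iSup (fun v : Euc n => ((φ (x + v) - R / 2 * ‖v‖ ^ 2 : ℝ) : EReal)) v
    have hterm2 : ((φ (y + v) - R / 2 * ‖v‖ ^ 2 : ℝ) : EReal) ≤ f y := by
      rw [hfre y]
      exact le_iSup (fun v : Euc n => ((φ (y + v) - R / 2 * ‖v‖ ^ 2 : ℝ) : EReal)) v
    have hcomb : φ (a • x + b • y + v) - R / 2 * ‖v‖ ^ 2
        ≤ a * (φ (x + v) - R / 2 * ‖v‖ ^ 2) + b * (φ (y + v) - R / 2 * ‖v‖ ^ 2) := by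
      have he : a • (x + v) + b • (y + v) = a • x + b • y + v := by
        have hb' : b = 1 - a := by linarith
        rw [hb']; module
      have h1 := hφconv (x + v) (y + v) a b ha hb hab
      rw [he] at h1
      have hq : a * (R / 2 * ‖v‖ ^ 2) + b * (R / 2 * ‖v‖ ^ 2) = R / 2 * ‖v‖ ^ 2 := by
        calc a * (R / 2 * ‖v‖ ^ 2) + b * (R / 2 * ‖v‖ ^ 2) = (a + b) * (R / 2 * ‖v‖ ^ 2) := by
              ring
          _ = R / 2 * ‖v‖ ^ 2 := by rw [hab, one_mul]
      calc φ (a • x + b • y + v) - R / 2 * ‖v‖ ^ 2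
          ≤ (a * φ (x + v) + b * φ (y + v))
            - (a * (R / 2 * ‖v‖ ^ 2) + b * (R / 2 * ‖v‖ ^ 2)) := by
            rw [hq]; exact sub_le_sub_right h1 _
        _ = a * (φ (x + v) - R / 2 * ‖v‖ ^ 2) + b * (φ (y + v) - R / 2 * ‖v‖ ^ 2) := by ring
    calc ((φ (a • x + b • y + v) - R / 2 * ‖v‖ ^ 2 : ℝ) : EReal)
        ≤ ((a * (φ (x + v) - R / 2 * ‖v‖ ^ 2) + b * (φ (y + v) - R / 2 * ‖v‖ ^ 2) : ℝ) : EReal) :=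
          EReal.coe_le_coe_iff.2 hcomb
      _ = (a : EReal) * ((φ (x + v) - R / 2 * ‖v‖ ^ 2 : ℝ) : EReal)
          + (b : EReal) * ((φ (y + v) - R / 2 * ‖v‖ ^ 2 : ℝ) : EReal) := by
          rw [EReal.coe_add, EReal.coe_mul, EReal.coe_mul]
      _ ≤ (a : EReal) * f x + (b : EReal) * f y :=
          add_le_add (mul_le_mul_of_nonneg_left hterm1 (by exact_mod_cast ha))
            (mul_le_mul_of_nonneg_left hterm2 (by exact_mod_cast hb))
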